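/- For p, q real with p² + q² = 1, p, q > 0, and p ≠ q, the set of triples (φ, X, Y) with φ ∈ ℝ, X, Y ∈ SU(2) satisfying diag(p,q) = e^{iφ} X diag(p,q) Yᵀ is exactly the set { (nπ, e^{iνσ₃}, conj(e^{iνσ₃})) : ν ∈ ℝ, n ∈ ℤ } up to absorbing the sign ±1 into X; in particular every solution has X diagonal and Y = conj(X) up to sign. -/

import Mathlib

open Matrix

noncomputable def diagExpSigma3 (ν : ℝ) : Matrix (Fin 2) (Fin 2) ℂ :=
  Matrix.diagonal ![Complex.exp (ν * Complex.I), Complex.exp (-ν * Complex.I)]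

/-- For 0 < p ≠ q > 0 with p² + q² = 1, the stabiliser equation
`diag(p,q) = e^{iφ} X diag(p,q) Yᵀ` for `X, Y ∈ SU(2)` holds iff `φ` is an
integer multiple of π, `X` is (up to the sign `e^{iφ} = ±1`) a diagonal matrix
`e^{iνσ₃}`, and `Y` is its entrywise complex conjugate. -/
theorem stmt_5 (p q : ℝ) (hp : 0 < p) (hq : 0 < q) (hpq : p ≠ q)
    (hnorm : p ^ 2 + q ^ 2 = 1)
    (φ : ℝ) (X Y : Matrix (Fin 2) (Fin 2) ℂ)
    (hX : X ∈ Matrix.specialUnitaryGroup (Fin 2) ℂ)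
    (hY : Y ∈ Matrix.specialUnitaryGroup (Fin 2) ℂ) :
    (Matrix.diagonal ![(p : ℂ), (q : ℂ)] =
        Complex.exp (φ * Complex.I) •
          (X * Matrix.diagonal ![(p : ℂ), (q : ℂ)] * Yᵀ)) ↔
      ∃ (n : ℤ) (ν : ℝ), φ = n * Real.pi ∧
        Complex.exp (φ * Complex.I) • X = diagExpSigma3 ν ∧
        Y = (diagExpSigma3 ν).map (starRingEnd ℂ) := by
  have hXm := (Matrix.mem_specialUnitaryGroup_iff).mp hX
  have hYm := (Matrix.mem_specialUnitaryGroup_iff).mp hY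
  obtain ⟨hXu, hXdet⟩ := hXm
  obtain ⟨hYu, hYdet⟩ := hYm
  have hXu' : star X * X = 1 := (Matrix.mem_unitaryGroup_iff').mp hXu
  have hXu2 : X * star X = 1 := (Matrix.mem_unitaryGroup_iff).mp hXu
  have hYu' : star Y * Y = 1 := (Matrix.mem_unitaryGroup_iff').mp hYu
  set c := Complex.exp (φ * Complex.I) with hc
  set D : Matrix (Fin 2) (Fin 2) ℂ := Matrix.diagonal ![(p:ℂ), (q:ℂ)] with hDdef
  have hp0 : (p:ℂ) ≠ 0 := by exact_mod_cast hp.ne'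
  have hq0 : (q:ℂ) ≠ 0 := by exact_mod_cast hq.ne'
  have hccs : c * star c = 1 := by
    rw [hc, Complex.star_def]; rw [Complex.mul_conj, ← Complex.sq_norm, Complex.norm_exp]; simp
  have hscc : star c * c = 1 := by rw [mul_comm] at hccs; exact hccs
  have hDs : star D = D := by
    rw [hDdef]
    ext i j
    simp [Matrix.star_apply, Matrix.diagonal_apply]
    fin_cases i <;> fin_cases j <;> simp
  have hppqq : (p:ℂ)*p ≠ (q:ℂ)*q := by
    intro h
    have h' : p * p = q * q := by exact_mod_cast h
    apply hpq
    nlinarith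
  constructor
  · intro h
    -- determinant gives c^2 = 1
    have hDdet : D.det = (p:ℂ) * q := by
      rw [hDdef]; simp [Matrix.det_diagonal, Fin.prod_univ_two]
    have hdet : (p:ℂ) * q = c ^ 2 * ((p:ℂ) * q) := by
      have hd := congrArg Matrix.det h
      simp only [Matrix.det_smul, Matrix.det_mul, hXdet, Matrix.det_transpose, hYdet,
        Fintype.card_fin, hDdet] at hd
      linear_combination hd
    have hc2 : c ^ 2 = 1 := by
      have hpq0 : (p:ℂ) * q ≠ 0 := mul_ne_zero hp0 hq0
      have h0 : (c ^ 2 - 1) * ((p:ℂ) * q) = 0 := by linear_combination -hdet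
      rcases mul_eq_zero.mp h0 with h1 | h1
      · linear_combination h1
      · exact absurd h1 hpq0
    -- φ = n π
    obtain ⟨n, hn⟩ : ∃ n : ℤ, (φ:ℂ) * Complex.I + (φ:ℂ) * Complex.I = n * (2 * Real.pi * Complex.I) := by
      rw [← Complex.exp_eq_one_iff, Complex.exp_add, ← hc, ← sq]
      exact hc2
    have hφn : φ = n * Real.pi := by
      have h2 : (φ:ℂ) * (2 * Complex.I) = (n:ℂ) * Real.pi * (2 * Complex.I) := by
        linear_combination hn
      have h3 : (φ:ℂ) = (n:ℂ) * Real.pi :=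
        mul_right_cancel₀ (by simp [Complex.I_ne_zero]) h2
      exact_mod_cast h3
    set X' := c • X with hX'def
    have hX'u : star X' * X' = 1 := by
      rw [hX'def, star_smul, smul_mul_smul_comm, hscc, hXu', one_smul]
    have hX'u2 : X' * star X' = 1 := by
      rw [hX'def, star_smul, smul_mul_smul_comm, hccs, hXu2, one_smul]
    have hE : D = X' * D * Yᵀ := by
      rw [hX'def, smul_mul_assoc, smul_mul_assoc]; exact h
    have hW : star X' * D = D * Yᵀ := by
      conv_lhs => rw [hE]
      rw [show star X' * (X' * D * Yᵀ) = (star X' * X') * (D * Yᵀ) by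
        noncomm_ring, hX'u, one_mul]
    have hW2 : star Yᵀ * D = D * X' := by
      have := congrArg star hW
      rw [Matrix.star_mul, Matrix.star_mul, hDs, star_star] at this
      exact this.symm
    have hYTu : Yᵀ * star Yᵀ = 1 := by
      have : (star Y * Y)ᵀ = (1 : Matrix (Fin 2) (Fin 2) ℂ)ᵀ := congrArg _ hYu'
      rw [Matrix.transpose_mul, Matrix.transpose_one] at this
      rw [show star Yᵀ = (star Y)ᵀ by rfl]
      exact this
    have hcomm : X' * (D * D) = (D * D) * X' := by
      have h1 : star X' * (D * D) * X' = D * D := by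
        calc star X' * (D * D) * X' = (star X' * D) * (D * X') := by noncomm_ring
          _ = (D * Yᵀ) * (star Yᵀ * D) := by rw [hW, hW2]
          _ = D * (Yᵀ * star Yᵀ) * D := by noncomm_ring
          _ = D * D := by rw [hYTu, mul_one]
      calc X' * (D * D) = X' * (star X' * (D * D) * X') := by rw [h1]
        _ = (X' * star X') * (D * D) * X' := by noncomm_ring
        _ = (D * D) * X' := by rw [hX'u2, one_mul]
    -- off-diagonal entries of X' vanish
    have hb : X' 0 1 = 0 := by
      have e := congrFun (congrFun hcomm 0) 1
      rw [hDdef] at e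
      simp [Matrix.mul_apply, Fin.sum_univ_two, Matrix.diagonal_apply] at e
      rcases mul_eq_zero.mp (show X' 0 1 * ((q:ℂ)*q - (p:ℂ)*p) = 0 by linear_combination e)
        with h1 | h1
      · exact h1
      · exact absurd h1 (sub_ne_zero.mpr (Ne.symm hppqq))
    have hc10 : X' 1 0 = 0 := by
      have e := congrFun (congrFun hcomm 1) 0
      rw [hDdef] at e
      simp [Matrix.mul_apply, Fin.sum_univ_two, Matrix.diagonal_apply] at e
      rcases mul_eq_zero.mp (show X' 1 0 * ((p:ℂ)*p - (q:ℂ)*q) = 0 by linear_combination e)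
        with h1 | h1
      · exact h1
      · exact absurd h1 (sub_ne_zero.mpr hppqq)
    -- determinant and unitarity of the diagonal X'
    have hdet' : X' 0 0 * X' 1 1 = 1 := by
      have hd : X'.det = 1 := by
        rw [hX'def, Matrix.det_smul, hXdet, Fintype.card_fin, mul_one]
        exact hc2
      rw [Matrix.det_fin_two, hb, zero_mul, sub_zero] at hd
      exact hd
    have hu00 : (starRingEnd ℂ) (X' 0 0) * X' 0 0 = 1 := by
      have e := congrFun (congrFun hX'u 0) 0
      simp [Matrix.mul_apply, Fin.sum_univ_two, Matrix.star_apply, hc10] at e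
      exact e
    have hns : Complex.normSq (X' 0 0) = 1 := by
      have : (Complex.normSq (X' 0 0) : ℂ) = 1 := by
        rw [← Complex.mul_conj]; linear_combination hu00
      exact_mod_cast this
    have habs : ‖X' 0 0‖ = 1 := by
      rw [Complex.norm_def, hns, Real.sqrt_one]
    set ν := Complex.arg (X' 0 0) with hν
    have ha_exp : X' 0 0 = Complex.exp ((ν:ℂ) * Complex.I) := by
      conv_lhs => rw [← Complex.norm_mul_exp_arg_mul_I (X' 0 0)]
      rw [habs, Complex.ofReal_one, one_mul]
    have hd_exp : X' 1 1 = Complex.exp (-((ν:ℂ) * Complex.I)) := by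
      have h1 : Complex.exp ((ν:ℂ) * Complex.I) * X' 1 1 = 1 := by
        rw [← ha_exp]; exact hdet'
      rw [Complex.exp_neg]
      exact eq_inv_of_mul_eq_one_right h1
    have hX'eq : X' = diagExpSigma3 ν := by
      ext i j
      fin_cases i <;> fin_cases j <;>
        simp [diagExpSigma3, Matrix.diagonal_apply, hb, hc10]
      · exact ha_exp
      · simpa using hd_exp
    have hYeq : Y = (diagExpSigma3 ν).map (starRingEnd ℂ) := by
      have e00 := congrFun (congrFun hW 0) 0
      have e01 := congrFun (congrFun hW 1) 0
      have e10 := congrFun (congrFun hW 0) 1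
      have e11 := congrFun (congrFun hW 1) 1
      rw [hX'eq, hDdef] at e00 e01 e10 e11
      simp [diagExpSigma3, Matrix.mul_apply, Fin.sum_univ_two, Matrix.diagonal_apply,
        Matrix.star_apply, Matrix.transpose_apply] at e00 e01 e10 e11
      ext i j
      fin_cases i <;> fin_cases j <;>
        simp [diagExpSigma3, Matrix.map_apply, Matrix.diagonal_apply]
      · exact mul_left_cancel₀ hp0 (by linear_combination -e00)
      · exact e01.resolve_left hq.ne'
      · exact e10.resolve_left hp.ne'
      · exact mul_left_cancel₀ hq0 (by linear_combination -e11)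
    exact ⟨n, ν, hφn, hX'eq, hYeq⟩
  · rintro ⟨n, ν, hφn, hXe, hYe⟩
    have hc2 : c ^ 2 = 1 := by
      rw [hc, sq, ← Complex.exp_add, hφn]
      rw [show ((↑(↑n * Real.pi):ℂ)) * Complex.I + ((↑(↑n * Real.pi):ℂ)) * Complex.I
          = (n:ℂ) * (2 * Real.pi * Complex.I) by push_cast; ring]
      exact Complex.exp_int_mul_two_pi_mul_I n
    have hee : Complex.exp ((ν:ℂ) * Complex.I) * Complex.exp (-((ν:ℂ) * Complex.I)) = 1 := by
      rw [← Complex.exp_add]; simp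
    rw [← smul_mul_assoc, ← smul_mul_assoc, hXe, hYe]
    ext i j
    fin_cases i <;> fin_cases j <;>
      simp [hDdef, diagExpSigma3, Matrix.mul_apply, Fin.sum_univ_two, Matrix.diagonal_apply,
        Matrix.transpose_apply, Matrix.map_apply, ← Complex.exp_conj, _root_.map_mul,
        Complex.conj_ofReal, Complex.conj_I] <;>
      first
        | rfl
        | linear_combination (p:ℂ) * hee
        | linear_combination (q:ℂ) * hee
        | linear_combination (-(p:ℂ)) * hee
        | linear_combination (-(q:ℂ)) * hee
        | linear_combination (-(p:ℂ)-(q:ℂ)) * hee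
        | linear_combination (-2*(q:ℂ)) * hee
        | linear_combination (-2*(p:ℂ)) * hee
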